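/- There exist 4×4 density matrices ρ and σ such that: (i) some quantum operation Φ with Φ∘Δ = Δ∘Φ (a DIO) satisfies Φ(ρ) = σ; and (ii) no incoherent operation maps ρ to σ, i.e. for every quantum operation Ψ admitting a Kraus decomposition (K_m) in which each K_m satisfies that K_m δ K_m† is diagonal for every diagonal density matrix δ, one has Ψ(ρ) ≠ σ. Hence there is a state transformation achievable by DIO but not by IO. -/

import Mathlib

open Matrix BigOperators ComplexOrder

/-- The l1-coherence of a matrix: the sum of the absolute values of its
off-diagonal entries. -/
noncomputable def Cl1 {n : ℕ} (A : Matrix (Fin n) (Fin n) ℂ) : ℝ :=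
  ∑ i, ∑ j, if i ≠ j then ‖A i j‖ else 0

/-- A density matrix: positive semidefinite with trace 1. -/
def IsDensity {n : ℕ} (ρ : Matrix (Fin n) (Fin n) ℂ) : Prop :=
  ρ.PosSemidef ∧ ρ.trace = 1

/-- A quantum operation (CPTP map) given by a finite family of Kraus operators. -/
def IsQuantumOp {n : ℕ} (Φ : Matrix (Fin n) (Fin n) ℂ → Matrix (Fin n) (Fin n) ℂ) : Prop :=
  ∃ (m : ℕ) (K : Fin m → Matrix (Fin n) (Fin n) ℂ),
    (∑ i, (K i)ᴴ * K i) = 1 ∧ ∀ ρ, Φ ρ = ∑ i, K i * ρ * (K i)ᴴ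

/-- The dephasing map `Δ`, keeping only the diagonal part of a matrix. -/
def Deph {n : ℕ} (A : Matrix (Fin n) (Fin n) ℂ) : Matrix (Fin n) (Fin n) ℂ :=
  Matrix.of fun i j => if i = j then A i j else 0

/-- An incoherent operation (IO): a quantum operation admitting a Kraus
decomposition each of whose Kraus operators maps diagonal density matrices to
diagonal matrices. -/
def IsIO {n : ℕ} (Ψ : Matrix (Fin n) (Fin n) ℂ → Matrix (Fin n) (Fin n) ℂ) : Prop :=
  ∃ (m : ℕ) (K : Fin m → Matrix (Fin n) (Fin n) ℂ),
    (∑ i, (K i)ᴴ * K i) = 1 ∧ (∀ ρ, Ψ ρ = ∑ i, K i * ρ * (K i)ᴴ) ∧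
    ∀ i, ∀ δ : Matrix (Fin n) (Fin n) ℂ, IsDensity δ → δ.IsDiag →
      (K i * δ * (K i)ᴴ).IsDiag

/-! ### Auxiliary lemmas: the l1-coherence is monotone under incoherent operations -/

section Mono

lemma sum_comm3 {α β γ : Type*} [Fintype α] [Fintype β] [Fintype γ]
    (F : α → β → γ → ℝ) :
    ∑ a, ∑ b, ∑ c, F a b c = ∑ c, ∑ a, ∑ b, F a b c :=
  calc ∑ a, ∑ b, ∑ c, F a b c
      = ∑ a, ∑ c, ∑ b, F a b c := Finset.sum_congr rfl fun _ _ => Finset.sum_comm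
    _ = ∑ c, ∑ a, ∑ b, F a b c := Finset.sum_comm

lemma sum5_reorder {A B C D E : Type*} [Fintype A] [Fintype B] [Fintype C]
    [Fintype D] [Fintype E] (X : A → B → C → D → E → ℝ) :
    ∑ i, ∑ k, ∑ m, ∑ j, ∑ l, X i k m j l
      = ∑ j, ∑ l, ∑ m, ∑ i, ∑ k, X i k m j l := by
  have h : (∑ p : A × B, ∑ q : C × D × E, X p.1 p.2 q.1 q.2.1 q.2.2)
      = ∑ q : C × D × E, ∑ p : A × B, X p.1 p.2 q.1 q.2.1 q.2.2 := Finset.sum_comm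
  simp only [Fintype.sum_prod_type] at h
  rw [h, ← sum_comm3 (fun j l m => ∑ i, ∑ k, X i k m j l)]

/-- The key monotonicity estimate: if a family of Kraus operators is
trace-preserving and each Kraus operator has at most one nonzero entry per
column, then the associated quantum operation does not increase `Cl1`. -/
lemma Cl1_IO_mono {n M : ℕ} (K : Fin M → Matrix (Fin n) (Fin n) ℂ)
    (hTP : (∑ m, (K m)ᴴ * K m) = 1)
    (f : Fin M → Fin n → Fin n)
    (hf : ∀ m i j, K m i j ≠ 0 → i = f m j)
    (ρ : Matrix (Fin n) (Fin n) ℂ) :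
    Cl1 (∑ m, K m * ρ * (K m)ᴴ) ≤ Cl1 ρ := by
  set T : Fin M → Fin n → Fin n → ℝ := fun m i j => ‖K m i j‖ with hT
  have hTnn : ∀ m i j, 0 ≤ T m i j := fun m i j => norm_nonneg _
  -- column sums
  have colsum : ∀ m j, (∑ i, T m i j) = T m (f m j) j := by
    intro m j
    refine Finset.sum_eq_single (f m j) (fun i _ hi => ?_) (by simp)
    have : K m i j = 0 := by
      by_contra h
      exact hi (hf m i j h)
    simp [hT, this]
  -- normalization
  have norm1 : ∀ j, (∑ m, ∑ i, (T m i j) ^ 2) = 1 := by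
    intro j
    have h1 : (∑ m, (K m)ᴴ * K m) j j = 1 := by rw [hTP]; simp [Matrix.one_apply]
    have h2 : (∑ m, (K m)ᴴ * K m) j j = ∑ m, ∑ i, star (K m i j) * K m i j := by
      simp [Matrix.sum_apply, Matrix.mul_apply, Matrix.conjTranspose_apply]
    have h3 : ∀ m i, star (K m i j) * K m i j = (((T m i j) ^ 2 : ℝ) : ℂ) := by
      intro m i
      rw [hT]
      dsimp only
      rw [Complex.sq_norm, Complex.star_def, mul_comm, Complex.mul_conj]
    rw [h2] at h1
    simp only [h3] at h1
    exact_mod_cast h1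
  have alphasq : ∀ j, (∑ m, (T m (f m j) j) ^ 2) ≤ 1 := by
    intro j
    rw [← norm1 j]
    exact Finset.sum_le_sum fun m _ =>
      Finset.single_le_sum (f := fun i => T m i j ^ 2) (fun i _ => sq_nonneg _)
        (Finset.mem_univ (f m j))
  -- step A : triangle inequality
  have stepA : Cl1 (∑ m, K m * ρ * (K m)ᴴ) ≤
      ∑ i, ∑ k, ∑ m, ∑ j, ∑ l,
        (if i ≠ k then T m i j * ‖ρ j l‖ * T m k l else 0) := by
    refine Finset.sum_le_sum fun i _ => Finset.sum_le_sum fun k _ => ?_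
    by_cases hik : i ≠ k
    · simp only [if_pos hik]
      have hentry : (∑ m, K m * ρ * (K m)ᴴ) i k
          = ∑ m, ∑ l, ∑ j, K m i j * ρ j l * star (K m k l) := by
        simp only [Matrix.sum_apply, Matrix.mul_apply, Matrix.conjTranspose_apply,
          Finset.sum_mul]
      rw [hentry]
      calc ‖∑ m, ∑ l, ∑ j, K m i j * ρ j l * star (K m k l)‖
          ≤ ∑ m, ∑ l, ∑ j, ‖K m i j * ρ j l * star (K m k l)‖ := by
            refine (norm_sum_le _ _).trans (Finset.sum_le_sum fun m _ => ?_)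
            refine (norm_sum_le _ _).trans (Finset.sum_le_sum fun l _ => ?_)
            exact norm_sum_le _ _
        _ = ∑ m, ∑ j, ∑ l, T m i j * ‖ρ j l‖ * T m k l := by
            refine Finset.sum_congr rfl fun m _ => ?_
            rw [Finset.sum_comm]
            refine Finset.sum_congr rfl fun j _ => Finset.sum_congr rfl fun l _ => ?_
            simp [hT, norm_mul, Complex.star_def, Complex.norm_conj]
    · simp only [if_neg hik]
      refine Finset.sum_nonneg fun m _ => Finset.sum_nonneg fun j _ =>
        Finset.sum_nonneg fun l _ => ?_
      positivity
  refine stepA.trans (le_of_eq (sum5_reorder _) |>.trans ?_)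
  have key : ∀ j l, (∑ m, ∑ i, ∑ k,
        (if i ≠ k then T m i j * ‖ρ j l‖ * T m k l else 0))
      ≤ (if j ≠ l then ‖ρ j l‖ else 0) := by
    intro j l
    by_cases hjl : j ≠ l
    · simp only [if_pos hjl]
      have hb1 : ∀ m, (∑ i, ∑ k,
            (if i ≠ k then T m i j * ‖ρ j l‖ * T m k l else 0))
          ≤ ‖ρ j l‖ * (T m (f m j) j * T m (f m l) l) := by
        intro m
        have : (∑ i, ∑ k, T m i j * ‖ρ j l‖ * T m k l)
            = ‖ρ j l‖ * (T m (f m j) j * T m (f m l) l) := by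
          rw [← colsum m j, ← colsum m l, Finset.sum_mul_sum, Finset.mul_sum]
          refine Finset.sum_congr rfl fun i _ => ?_
          rw [Finset.mul_sum]
          exact Finset.sum_congr rfl fun k _ => by ring
        rw [← this]
        refine Finset.sum_le_sum fun i _ => Finset.sum_le_sum fun k _ => ?_
        by_cases hik : i ≠ k
        · rw [if_pos hik]
        · rw [if_neg hik]; positivity
      calc (∑ m, ∑ i, ∑ k,
            (if i ≠ k then T m i j * ‖ρ j l‖ * T m k l else 0))
          ≤ ∑ m, ‖ρ j l‖ * (T m (f m j) j * T m (f m l) l) :=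
            Finset.sum_le_sum fun m _ => hb1 m
        _ = ‖ρ j l‖ * ∑ m, T m (f m j) j * T m (f m l) l := by
            rw [Finset.mul_sum]
        _ ≤ ‖ρ j l‖ * 1 := by
            refine mul_le_mul_of_nonneg_left ?_ (norm_nonneg _)
            have h2 : ∀ m : Fin M, T m (f m j) j * T m (f m l) l
                ≤ ((T m (f m j) j) ^ 2 + (T m (f m l) l) ^ 2) / 2 := by
              intro m
              nlinarith [sq_nonneg (T m (f m j) j - T m (f m l) l)]
            calc (∑ m, T m (f m j) j * T m (f m l) l)
                ≤ ∑ m, ((T m (f m j) j) ^ 2 + (T m (f m l) l) ^ 2) / 2 :=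
                  Finset.sum_le_sum fun m _ => h2 m
              _ = ((∑ m, (T m (f m j) j) ^ 2) + ∑ m, (T m (f m l) l) ^ 2) / 2 := by
                  rw [← Finset.sum_add_distrib, Finset.sum_div]
              _ ≤ (1 + 1) / 2 := by
                  have := alphasq j; have := alphasq l; linarith
              _ = 1 := by norm_num
        _ = ‖ρ j l‖ := mul_one _
    · push_neg at hjl
      subst hjl
      simp only [ne_eq, not_true_eq_false, if_false]
      have : ∀ m : Fin M, ∀ i k : Fin n,
          (if i ≠ k then T m i j * ‖ρ j j‖ * T m k j else 0) = 0 := by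
        intro m i k
        by_cases hik : i ≠ k
        · rw [if_pos hik]
          by_cases h1 : K m i j = 0
          · simp [hT, h1]
          · have hi := hf m i j h1
            have h2 : K m k j = 0 := by
              by_contra h2
              exact hik (by rw [hi, hf m k j h2])
            simp [hT, h2]
        · rw [if_neg hik]
      simp only [this, Finset.sum_const_zero, le_refl]
  calc (∑ j, ∑ l, ∑ m, ∑ i, ∑ k,
        (if i ≠ k then T m i j * ‖ρ j l‖ * T m k l else 0))
      ≤ ∑ j, ∑ l, (if j ≠ l then ‖ρ j l‖ else 0) :=
        Finset.sum_le_sum fun j _ => Finset.sum_le_sum fun l _ => key j l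
    _ = Cl1 ρ := rfl

end Mono

/-! ### Structure of incoherent Kraus operators -/

lemma col_structure {n : ℕ} (K : Matrix (Fin n) (Fin n) ℂ)
    (h : ∀ δ : Matrix (Fin n) (Fin n) ℂ, IsDensity δ → δ.IsDiag →
      (K * δ * Kᴴ).IsDiag) :
    ∃ f : Fin n → Fin n, ∀ i j, K i j ≠ 0 → i = f j := by
  have key : ∀ j i k : Fin n, i ≠ k → K i j * star (K k j) = 0 := by
    intro j i k hik
    set δ : Matrix (Fin n) (Fin n) ℂ := Matrix.diagonal (Pi.single j 1) with hδ
    have hdens : IsDensity δ := by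
      constructor
      · refine Matrix.posSemidef_diagonal_iff.mpr fun i => ?_
        rcases eq_or_ne i j with rfl | hij
        · simp
        · simp [Pi.single_apply, hij]
      · simp [hδ, Matrix.trace_diagonal]
    have hdiag : δ.IsDiag := Matrix.isDiag_diagonal _
    have hres : (K * δ * Kᴴ) i k = 0 := h δ hdens hdiag hik
    have hentry : (K * δ * Kᴴ) i k = K i j * star (K k j) := by
      rw [hδ]
      simp [Matrix.mul_apply, Matrix.diagonal_apply, Matrix.conjTranspose_apply,
        Pi.single_apply, ite_mul, mul_ite, Finset.sum_ite_eq, Finset.sum_ite_eq']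
    rw [hentry] at hres
    exact hres
  classical
  refine ⟨fun j => if h : ∃ i, K i j ≠ 0 then h.choose else j, fun i j hij => ?_⟩
  have hex : ∃ i, K i j ≠ 0 := ⟨i, hij⟩
  simp only [dif_pos hex]
  by_contra hne
  have := key j i hex.choose hne
  rcases mul_eq_zero.mp this with h1 | h2
  · exact hij h1
  · exact hex.choose_spec (by simpa using h2)

/-! ### The explicit example -/

namespace DIOEx

noncomputable def K1 : Matrix (Fin 4) (Fin 4) ℂ :=
  !![3/5, 0, 0, 0; 0, 16/25, 0, -9/25; 0, 0, 3/5, 0; 0, -9/25, 0, 16/25]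

noncomputable def K2 : Matrix (Fin 4) (Fin 4) ℂ :=
  !![0, 0, 4/5, 0; 0, 12/25, 0, 12/25; 4/5, 0, 0, 0; 0, 12/25, 0, 12/25]

noncomputable def rho : Matrix (Fin 4) (Fin 4) ℂ :=
  !![1/2, 1/2, 0, 0; 1/2, 1/2, 0, 0; 0, 0, 0, 0; 0, 0, 0, 0]

noncomputable def sigma : Matrix (Fin 4) (Fin 4) ℂ :=
  !![9/50, 24/125, 0, -27/250;
     24/125, 8/25, 24/125, 0;
     0, 24/125, 8/25, 24/125;
     -27/250, 0, 24/125, 9/50]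

set_option maxHeartbeats 2000000

lemma K1_herm : K1ᴴ = K1 := by
  ext i j
  fin_cases i <;> fin_cases j <;>
    simp [K1, Matrix.conjTranspose_apply, Matrix.vecHead, Matrix.vecTail,
      Complex.star_def, map_div₀, map_neg, map_ofNat]

lemma K2_herm : K2ᴴ = K2 := by
  ext i j
  fin_cases i <;> fin_cases j <;>
    simp [K2, Matrix.conjTranspose_apply, Matrix.vecHead, Matrix.vecTail,
      Complex.star_def, map_div₀, map_neg, map_ofNat]

lemma TP : K1ᴴ * K1 + K2ᴴ * K2 = 1 := by
  rw [K1_herm, K2_herm]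
  ext i j
  fin_cases i <;> fin_cases j <;>
    (simp [K1, K2, Matrix.mul_apply, Fin.sum_univ_four, Matrix.one_apply,
      Matrix.vecHead, Matrix.vecTail]; try norm_num)

lemma phi_rho : K1 * rho * K1ᴴ + K2 * rho * K2ᴴ = sigma := by
  rw [K1_herm, K2_herm]
  ext i j
  fin_cases i <;> fin_cases j <;>
    (simp [K1, K2, rho, sigma, Matrix.mul_apply, Fin.sum_univ_four,
      Matrix.vecHead, Matrix.vecTail]; try norm_num)

lemma dio (A : Matrix (Fin 4) (Fin 4) ℂ) :
    K1 * Deph A * K1ᴴ + K2 * Deph A * K2ᴴ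
      = Deph (K1 * A * K1ᴴ + K2 * A * K2ᴴ) := by
  rw [K1_herm, K2_herm]
  have h3 : (Fin.succ 2 : Fin 4) = 3 := rfl
  ext i j
  fin_cases i <;> fin_cases j <;>
    (simp only [K1, K2, Deph, Matrix.add_apply, Matrix.mul_apply, Matrix.of_apply,
      Fin.sum_univ_four, Matrix.cons_val', Matrix.cons_val_zero, Matrix.cons_val_one,
      Matrix.head_cons, Matrix.empty_val', Matrix.cons_val_fin_one, Matrix.head_fin_const,
      Matrix.cons_val_two, Matrix.cons_val_three, Matrix.tail_cons, Matrix.vecHead,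
      Matrix.vecTail, Function.comp_apply, h3, Fin.isValue]
     norm_num [Fin.ext_iff, Fin.val_natCast, Matrix.vecHead, Matrix.vecTail]
     try simp (config := { decide := true }) only [if_true, if_false]
     try simp +decide
     try ring)

lemma rho_density : IsDensity rho := by
  constructor
  · have h : rho = rhoᴴ * rho := by
      ext i j
      fin_cases i <;> fin_cases j <;>
        (simp [rho, Matrix.mul_apply, Matrix.conjTranspose_apply, Fin.sum_univ_four,
          Matrix.vecHead, Matrix.vecTail, Complex.star_def, map_div₀, map_inv₀,
          map_ofNat]; try norm_num)
    rw [h]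
    exact Matrix.posSemidef_conjTranspose_mul_self rho
  · simp [rho, Matrix.trace, Fin.sum_univ_four, Matrix.diag,
      Matrix.vecHead, Matrix.vecTail]
    norm_num

lemma sigma_density : IsDensity sigma := by
  constructor
  · rw [← phi_rho]
    exact Matrix.PosSemidef.add
      (rho_density.1.mul_mul_conjTranspose_same K1)
      (rho_density.1.mul_mul_conjTranspose_same K2)
  · simp [sigma, Matrix.trace, Fin.sum_univ_four, Matrix.diag,
      Matrix.vecHead, Matrix.vecTail]
    norm_num

lemma Cl1_rho : Cl1 rho = 1 := by
  simp [Cl1, rho, Fin.sum_univ_four, Matrix.vecHead, Matrix.vecTail]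
  norm_num [map_div₀, Complex.norm_ofNat]

lemma Cl1_sigma : Cl1 sigma = 171/125 := by
  simp [Cl1, sigma, Fin.sum_univ_four, Matrix.vecHead, Matrix.vecTail]
  norm_num [map_div₀, Complex.norm_ofNat]
  try simp (config := { decide := true }) only [if_true, if_false]
  try simp +decide
  try norm_num

end DIOEx

theorem DIO_state_transformation_not_IO :
    ∃ ρ σ : Matrix (Fin 4) (Fin 4) ℂ, IsDensity ρ ∧ IsDensity σ ∧
      (∃ Φ : Matrix (Fin 4) (Fin 4) ℂ → Matrix (Fin 4) (Fin 4) ℂ,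
        IsQuantumOp Φ ∧ (∀ A, Φ (Deph A) = Deph (Φ A)) ∧ Φ ρ = σ) ∧
      (∀ Ψ : Matrix (Fin 4) (Fin 4) ℂ → Matrix (Fin 4) (Fin 4) ℂ,
        IsIO Ψ → Ψ ρ ≠ σ) := by
  refine ⟨DIOEx.rho, DIOEx.sigma, DIOEx.rho_density, DIOEx.sigma_density, ?_, ?_⟩
  · refine ⟨fun A => DIOEx.K1 * A * DIOEx.K1ᴴ + DIOEx.K2 * A * DIOEx.K2ᴴ,
      ⟨2, ![DIOEx.K1, DIOEx.K2], ?_, ?_⟩, ?_, ?_⟩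
    · simpa [Fin.sum_univ_two] using DIOEx.TP
    · intro ρ
      simp [Fin.sum_univ_two]
    · intro A
      exact DIOEx.dio A
    · exact DIOEx.phi_rho
  · intro Ψ hΨ hcontra
    obtain ⟨M, K, hTP, hrep, hinc⟩ := hΨ
    have hex : ∀ m, ∃ f : Fin 4 → Fin 4, ∀ i j, K m i j ≠ 0 → i = f j :=
      fun m => col_structure (K m) (fun δ h1 h2 => hinc m δ h1 h2)
    choose f hf using hex
    have hmono := Cl1_IO_mono K hTP f hf DIOEx.rho
    rw [← hrep, hcontra, DIOEx.Cl1_rho, DIOEx.Cl1_sigma] at hmono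
    norm_num at hmono
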